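/- The intersection F_19 ∩ C is nonempty; that is, there exists a point of the ternary Cantor set whose continued fraction partial quotients are all at most 19. -/

import Mathlib

/-- The Gauss map `x ↦ {1/x}`. -/
noncomputable def gaussMap (x : ℝ) : ℝ := Int.fract (1 / x)

/-- `Fset n` is the set of irrational numbers in `(0,1)` all of whose continued
fraction partial quotients are at most `n`. -/
noncomputable def Fset (n : ℕ) : Set ℝ :=
  {x | Irrational x ∧ x ∈ Set.Ioo (0 : ℝ) 1 ∧
    ∀ k : ℕ, ⌊1 / (gaussMap^[k] x)⌋ ≤ (n : ℤ)}

/-- The ternary Cantor set `{∑ 2bₙ 3^{-(n+1)} : b : ℕ → {0,1}}`. -/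
noncomputable def ternaryCantor : Set ℝ :=
  {x | ∃ b : ℕ → Bool, x = ∑' n : ℕ, (if b n then (2 : ℝ) else 0) / 3 ^ (n + 1)}


def Avoid (k : ℕ) (u : ℚ) : Prop :=
  ∀ p q : ℤ, 0 < q → 10 * q^2 ≤ 3^(k+1) →
    ∀ y : ℝ, (u:ℝ) ≤ y → y ≤ u + 1/3^k → 1/(20*q^2) < |y - p/q|

lemma core (K a b : ℤ) (ha : 0 < a) (hb : 0 < b) (hK : 3 ≤ K)
    (h1 : K < 10*a^2) (h2 : K < 10*b^2)
    (h3 : 10*a^2 ≤ 3*K - 1) (h4 : 10*b^2 ≤ 3*K - 1)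
    (h5 : 20*K*a*b ≤ 60*a^2*b^2 + K*(a^2+b^2)) : False := by
  set M : ℤ := 3*K - 1 with hM
  set A : ℤ := 10*a^2 with hA
  set B : ℤ := 10*b^2 with hB
  set c : ℤ := 10*a*b with hc
  have hcpos : 0 < c := by positivity
  have hcsq : c^2 = A*B := by ring
  have hS1 : 0 ≤ (M - A)*(M - B) := mul_nonneg (by omega) (by omega)
  have hcM : c ≤ M := by nlinarith [sq_nonneg (c - M), sq_nonneg (c + M)]
  have hcK : K + 1 ≤ c := by nlinarith [sq_nonneg (c - K - 1), sq_nonneg (c + K + 1)]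
  have hS2 : 0 ≤ (c - (K+1))*(M - c) := mul_nonneg (by omega) (by omega)
  have h5' : 20*K*c ≤ 6*c^2 + K*(A+B) := by nlinarith [h5]
  nlinarith [mul_le_mul_of_nonneg_left h5' (by omega : (0:ℤ) ≤ M), hS1, hS2,
    mul_nonneg (mul_nonneg (by omega : (0:ℤ) ≤ 6*M + K) (by omega : (0:ℤ) ≤ c - (K+1))) (by omega : (0:ℤ) ≤ M - c),
    mul_pos hcpos hcpos, hK]

lemma base : Avoid 2 (2/9) := by
  intro p q hq hq2 y hy1 hy2
  have hq1 : q = 1 := by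
    rcases lt_or_ge q 2 with h | h
    · omega
    · exfalso
      have h4 : 4 ≤ q^2 := by nlinarith
      norm_num at hq2
      omega
  subst hq1
  push_cast at hy1 hy2 ⊢
  rcases le_or_gt p 0 with hp | hp
  · have hpR : (p:ℝ) ≤ 0 := by exact_mod_cast hp
    rw [abs_of_pos (by norm_num; linarith)]
    norm_num; linarith
  · have hpR : (1:ℝ) ≤ p := by exact_mod_cast hp
    rw [abs_of_neg (by norm_num at hy2 ⊢; linarith)]
    norm_num at hy2 ⊢; linarith

lemma step (k : ℕ) (u : ℚ) (h : Avoid k u) :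
    ∃ u', (u' = u ∨ u' = u + 2/3^(k+1)) ∧ Avoid (k+1) u' := by
  by_cases hL : Avoid (k+1) u
  · exact ⟨u, Or.inl rfl, hL⟩
  by_cases hR : Avoid (k+1) (u + 2/3^(k+1))
  · exact ⟨u + 2/3^(k+1), Or.inr rfl, hR⟩
  exfalso
  unfold Avoid at hL hR
  push_neg at hL hR
  obtain ⟨p1, q1, hq1, hq1b, y1, hy1a, hy1b, hd1⟩ := hL
  obtain ⟨p2, q2, hq2, hq2b, y2, hy2a, hy2b, hd2⟩ := hR
  have h3k : (0:ℝ) < 3^k := by positivity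
  have h3k1 : (0:ℝ) < 3^(k+1) := by positivity
  have hq1R : (0:ℝ) < (q1:ℝ) := by exact_mod_cast hq1
  have hq2R : (0:ℝ) < (q2:ℝ) := by exact_mod_cast hq2
  have hpos23 : (0:ℝ) < 2/3^(k+1) := by positivity
  have hcast : ((u + 2/3^(k+1) : ℚ) : ℝ) = (u:ℝ) + 2/3^(k+1) := by push_cast; ring
  have h3pow : (1:ℝ)/3^k = 3/3^(k+1) := by
    rw [pow_succ]; field_simp
  have hy2a' : (u:ℝ) + 2/3^(k+1) ≤ y2 := by rw [hcast] at hy2a; exact hy2a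
  have hy2b' : y2 ≤ (u:ℝ) + 3/3^(k+1) := by
    rw [hcast] at hy2b
    have : (1:ℝ)/3^(k+1) + 2/3^(k+1) = 3/3^(k+1) := by ring
    linarith
  have h1le3 : (1:ℝ)/3^(k+1) ≤ 3/3^(k+1) := by
    gcongr <;> norm_num
  have hy1b' : y1 ≤ (u:ℝ) + 3/3^(k+1) := by linarith
  have hbig : ∀ (p q : ℤ) (y : ℝ), 0 < q → (u:ℝ) ≤ y → y ≤ (u:ℝ) + 3/3^(k+1) →
      |y - p/q| ≤ 1/(20*q^2) → (3:ℤ)^(k+1) < 10*q^2 := by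
    intro p q y hq hya hyb hd
    by_contra hc
    push_neg at hc
    have := h p q hq hc y hya (by rw [h3pow]; exact hyb)
    linarith
  have hbig1 := hbig p1 q1 y1 hq1 hy1a hy1b' hd1
  have hbig2 := hbig p2 q2 y2 hq2 (by linarith) hy2b' hd2
  have hrad : ∀ q : ℤ, 0 < q → (3:ℤ)^(k+1) < 10*q^2 →
      1/(20*(q:ℝ)^2) < 1/(2*3^(k+1)) := by
    intro q hq hbigq
    have hq2R : (0:ℝ) < (q:ℝ)^2 := by positivity
    apply div_lt_div_of_pos_left (by norm_num) (by positivity)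
    have : ((3:ℝ))^(k+1) < 10*(q:ℝ)^2 := by exact_mod_cast hbigq
    linarith
  have hr1 := hrad q1 hq1 hbig1
  have hr2 := hrad q2 hq2 hbig2
  have habs1 := abs_le.mp hd1
  have habs2 := abs_le.mp hd2
  have hhalf : (1:ℝ)/(2*3^(k+1)) = (1/2) * (1/3^(k+1)) := by ring
  have hs2 : (2:ℝ)/3^(k+1) = 2*(1/3^(k+1)) := by ring
  have ht3 : (3:ℝ)/3^(k+1) = 3*(1/3^(k+1)) := by ring
  by_cases hcc : (p1:ℝ)/q1 = (p2:ℝ)/q2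
  · have e1 : (p1:ℝ)/q1 ≤ y1 + 1/(20*q1^2) := by linarith [habs1.1]
    have e2 : y2 - 1/(20*q2^2) ≤ (p2:ℝ)/q2 := by linarith [habs2.2]
    rw [hcc] at e1
    linarith
  · have hne : p1*q2 - p2*q1 ≠ 0 := by
      intro hc; apply hcc
      rw [div_eq_div_iff (ne_of_gt hq1R) (ne_of_gt hq2R)]
      exact_mod_cast (by omega : p1*q2 = p2*q1)
    have hnum : (1:ℝ) ≤ |((p1*q2 - p2*q1 : ℤ) : ℝ)| := by
      rw [← Int.cast_abs]
      exact_mod_cast Int.one_le_abs hne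
    have hsep : 1/((q1:ℝ)*q2) ≤ |(p1:ℝ)/q1 - (p2:ℝ)/q2| := by
      have heq : (p1:ℝ)/q1 - (p2:ℝ)/q2 = ((p1*q2 - p2*q1 : ℤ) : ℝ)/((q1:ℝ)*q2) := by
        push_cast; field_simp
      rw [heq, abs_div, abs_of_pos (by positivity : (0:ℝ) < (q1:ℝ)*q2)]
      gcongr
    -- gap bound: |c1 - c2| ≤ 3/3^(k+1) + r1 + r2
    have hgap : |(p1:ℝ)/q1 - (p2:ℝ)/q2| ≤ 3/3^(k+1) + 1/(20*q1^2) + 1/(20*q2^2) := by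
      rw [abs_le]
      constructor <;>
        linarith [habs1.1, habs1.2, habs2.1, habs2.2, hy1a, hy1b', hy2a', hy2b', hs2, ht3]
    have hineq : 1/((q1:ℝ)*q2) ≤ 3/3^(k+1) + 1/(20*q1^2) + 1/(20*q2^2) := le_trans hsep hgap
    -- clear denominators
    set K : ℤ := 3^(k+1) with hK
    have hKR : ((K:ℤ):ℝ) = (3:ℝ)^(k+1) := by rw [hK]; push_cast; ring
    have heq2 : 3/(3:ℝ)^(k+1) + 1/(20*(q1:ℝ)^2) + 1/(20*(q2:ℝ)^2) - 1/((q1:ℝ)*q2)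
        = (60*(q1:ℝ)^2*(q2:ℝ)^2 + (3:ℝ)^(k+1)*((q1:ℝ)^2+(q2:ℝ)^2) - 20*(3:ℝ)^(k+1)*q1*q2)
          / (20*(3:ℝ)^(k+1)*(q1:ℝ)^2*(q2:ℝ)^2) := by
      field_simp; ring
    have hD : (0:ℝ) < 20*(3:ℝ)^(k+1)*(q1:ℝ)^2*(q2:ℝ)^2 := by positivity
    have h0 : 0 ≤ (60*(q1:ℝ)^2*(q2:ℝ)^2 + (3:ℝ)^(k+1)*((q1:ℝ)^2+(q2:ℝ)^2) - 20*(3:ℝ)^(k+1)*q1*q2)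
          / (20*(3:ℝ)^(k+1)*(q1:ℝ)^2*(q2:ℝ)^2) := by
      rw [← heq2]; linarith
    have hXR : (0:ℝ) ≤ 60*(q1:ℝ)^2*(q2:ℝ)^2 + (3:ℝ)^(k+1)*((q1:ℝ)^2+(q2:ℝ)^2) - 20*(3:ℝ)^(k+1)*q1*q2 := by
      by_contra hneg
      push_neg at hneg
      have := div_neg_of_neg_of_pos hneg hD
      linarith
    have hXZ : 20*K*q1*q2 ≤ 60*q1^2*q2^2 + K*(q1^2+q2^2) := by
      have : (20*(K:ℝ)*q1*q2 : ℝ) ≤ 60*(q1:ℝ)^2*(q2:ℝ)^2 + (K:ℝ)*((q1:ℝ)^2+(q2:ℝ)^2) := by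
        rw [hKR]; linarith
      exact_mod_cast this
    -- parity: 10 q^2 ≤ 3K - 1
    have hodd : Odd ((3:ℤ)^(k+2)) := Odd.pow (by decide)
    have h3K : (3:ℤ)^(k+2) = 3*K := by rw [hK, pow_succ]; ring
    have hpar : ∀ q : ℤ, 10*q^2 ≤ (3:ℤ)^(k+1+1) → 10*q^2 ≤ 3*K - 1 := by
      intro q hle
      have hne' : 10*q^2 ≠ 3*K := by
        intro hc
        have : Even (10*q^2) := ⟨5*q^2, by ring⟩
        rw [hc, ← h3K] at this
        exact (Int.not_even_iff_odd.mpr hodd) this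
      rw [show (k+1+1) = (k+2) from rfl, h3K] at hle
      omega
    have hK3 : (3:ℤ) ≤ K := by
      rw [hK]
      calc (3:ℤ) = 3^1 := by norm_num
      _ ≤ 3^(k+1) := by
        apply pow_le_pow_right₀ (by norm_num)
        omega
    exact core K q1 q2 hq1 hq2 hK3 hbig1 hbig2 (hpar q1 hq1b) (hpar q2 hq2b) hXZ

noncomputable def seq : (m : ℕ) → {u : ℚ // Avoid (m+2) u}
  | 0 => ⟨2/9, base⟩
  | (m+1) => ⟨(step (m+2) (seq m).1 (seq m).2).choose,
      (step (m+2) (seq m).1 (seq m).2).choose_spec.2⟩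

lemma seq_succ (m : ℕ) : (seq (m+1)).1 = (seq m).1 ∨
    (seq (m+1)).1 = (seq m).1 + 2/3^(m+3) := by
  have h := (step (m+2) (seq m).1 (seq m).2).choose_spec.1
  show (step (m+2) (seq m).1 (seq m).2).choose = _ ∨ _
  exact h

noncomputable def dig : ℕ → Bool
  | 0 => false
  | 1 => true
  | (n+2) => if (seq (n+1)).1 = (seq n).1 then false else true

lemma useq (m : ℕ) :
    ((seq m).1 : ℚ) = ∑ n ∈ Finset.range (m+2), (if dig n then (2:ℚ) else 0)/3^(n+1) := by
  induction m with
  | zero =>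
    show (2/9 : ℚ) = _
    rw [Finset.sum_range_succ, Finset.sum_range_one]
    norm_num [dig]
  | succ m ih =>
    show ((seq (m+1)).1 : ℚ) = ∑ n ∈ Finset.range ((m+2)+1), (if dig n then (2:ℚ) else 0)/3^(n+1)
    rw [Finset.sum_range_succ, ← ih]
    rcases seq_succ m with h | h
    · rw [h]
      have : dig (m+2) = false := by simp [dig, h]
      rw [this]
      norm_num
    · rw [h]
      have hne : (seq (m+1)).1 ≠ (seq m).1 := by
        rw [h]
        intro hc
        have : (2:ℚ)/3^(m+3) = 0 := by linarith
        norm_num at this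
      have : dig (m+2) = true := by simp [dig, hne]
      rw [this]
      norm_num

noncomputable def xpt : ℝ := ∑' n : ℕ, (if dig n then (2:ℝ) else 0) / 3 ^ (n + 1)

lemma fsummable : Summable (fun n : ℕ => (if dig n then (2:ℝ) else 0) / 3 ^ (n + 1)) := by
  apply Summable.of_nonneg_of_le (fun n => by positivity)
    (fun n => ?_) ((summable_geometric_of_lt_one (by norm_num) (by norm_num : (1/3:ℝ) < 1)).mul_left 2)
  · have h1 : (if dig n then (2:ℝ) else 0) ≤ 2 := by split <;> norm_num
    have h2 : (0:ℝ) < 3^(n+1) := by positivity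
    calc (if dig n then (2:ℝ) else 0) / 3 ^ (n + 1) ≤ 2/3^(n+1) := by gcongr
    _ ≤ 2 * (1/3)^n := by
        rw [div_pow, one_pow, mul_one_div]
        exact div_le_div_of_nonneg_left (by norm_num) (by positivity)
          (pow_le_pow_right₀ (by norm_num) (by omega))

lemma xpt_bounds (m : ℕ) : ((seq m).1 : ℝ) ≤ xpt ∧ xpt ≤ (seq m).1 + 1/3^(m+2) := by
  have hf := fsummable
  have hsplit := (Summable.sum_add_tsum_nat_add (f := fun n : ℕ => (if dig n then (2:ℝ) else 0) / 3 ^ (n + 1)) (m+2) hf).symm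
  have hpart : (∑ n ∈ Finset.range (m+2), (if dig n then (2:ℝ) else 0) / 3 ^ (n + 1)) = ((seq m).1 : ℝ) := by
    rw [useq m]
    push_cast
    refine Finset.sum_congr rfl fun x _ => ?_
    split <;> norm_num
  have htail0 : 0 ≤ ∑' n : ℕ, (if dig (n + (m+2)) then (2:ℝ) else 0) / 3 ^ ((n + (m+2)) + 1) :=
    tsum_nonneg (fun n => by positivity)
  have htailgeo : Summable (fun n : ℕ => (2:ℝ)/3^(m+3) * (1/3)^n) :=
    (summable_geometric_of_lt_one (by norm_num) (by norm_num : (1/3:ℝ) < 1)).mul_left _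
  have htail1 : (∑' n : ℕ, (if dig (n + (m+2)) then (2:ℝ) else 0) / 3 ^ ((n + (m+2)) + 1))
      ≤ ∑' n : ℕ, (2:ℝ)/3^(m+3) * (1/3)^n := by
    apply Summable.tsum_le_tsum _ (hf.comp_injective (add_left_injective (m+2))) htailgeo
    intro n
    have h1 : (if dig (n + (m+2)) then (2:ℝ) else 0) ≤ 2 := by split <;> norm_num
    have heq : (2:ℝ)/3^(m+3) * (1/3)^n = 2/3^(n + (m+2) + 1) := by
      rw [div_pow, one_pow]
      rw [div_mul_div_comm]
      congr 1
      · norm_num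
      · rw [← pow_add]
        congr 1
        omega
    rw [heq]
    exact (div_le_div_iff_of_pos_right (by positivity)).mpr h1
  have hgeosum : (∑' n : ℕ, (2:ℝ)/3^(m+3) * (1/3)^n) = 1/3^(m+2) := by
    rw [tsum_mul_left, tsum_geometric_of_lt_one (by norm_num) (by norm_num : (1/3:ℝ) < 1),
      show (1 - (1/3:ℝ))⁻¹ = 3/2 by norm_num]
    have h3 : (3:ℝ)^(m+3) = 3^(m+2)*3 := by rw [pow_succ]
    have h2 : (0:ℝ) < (3:ℝ)^(m+2) := by positivity
    rw [h3]
    field_simp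
  constructor
  · rw [show xpt = _ from hsplit, hpart]
    linarith
  · rw [show xpt = _ from hsplit, hpart]
    have := htail1.trans (le_of_eq hgeosum)
    linarith

lemma xpt_badly : ∀ p q : ℤ, 0 < q → 1/(20*(q:ℝ)^2) < |xpt - p/q| := by
  intro p q hq
  obtain ⟨m, hm⟩ := pow_unbounded_of_one_lt (R := ℤ) (10*q^2) (by norm_num : (1:ℤ) < 3)
  have hle : 10*q^2 ≤ 3^(m+3) := by
    calc (10*q^2 : ℤ) ≤ 3^m := le_of_lt hm
    _ ≤ 3^(m+3) := pow_le_pow_right₀ (by norm_num) (by omega)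
  have hinv := (seq m).2
  have hb := xpt_bounds m
  exact hinv p q hq hle xpt hb.1 hb.2

lemma xpt_irrational : Irrational xpt := by
  rw [irrational_iff_ne_rational]
  intro a b hb0 hab
  rcases eq_or_ne b 0 with hb | hb
  · subst hb
    norm_num at hab
    -- x = a/0 = 0? in Lean a/0 = 0, so xpt = 0 contradicts xpt ≥ 2/9
    have h0 := (xpt_bounds 0).1
    have : ((seq 0).1 : ℝ) = 2/9 := by norm_num [seq]
    rw [this] at h0
    rw [hab] at h0
    norm_num at h0
  · rcases lt_or_gt_of_ne hb with hneg | hpos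
    · have := xpt_badly (-a) (-b) (by omega)
      rw [hab] at this
      have heq : ((-a : ℤ):ℝ)/((-b : ℤ):ℝ) = (a:ℝ)/b := by push_cast; rw [neg_div_neg_eq]
      rw [heq, sub_self, abs_zero] at this
      have hbp : (0:ℝ) < ((-b:ℤ):ℝ) := by exact_mod_cast (by omega : (0:ℤ) < -b)
      have h2 : (0:ℝ) < 1/(20*((-b:ℤ):ℝ)^2) := one_div_pos.mpr (by nlinarith)
      linarith
    · have := xpt_badly a b hpos
      rw [hab, sub_self, abs_zero] at this
      have h2 : (0:ℝ) < 1/(20*(b:ℝ)^2) := by positivity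
      linarith

lemma xpt_mem : 0 < xpt ∧ xpt < 1 := by
  have hb := xpt_bounds 0
  have h1 : ((seq 0).1 : ℝ) = 2/9 := by norm_num [seq]
  rw [h1] at hb
  norm_num at hb
  constructor <;> linarith [hb.1, hb.2]


lemma orbit_props (x : ℝ) (hx : Irrational x) (h0 : 0 < x) (h1 : x < 1) :
    ∀ k, Irrational (gaussMap^[k] x) ∧ 0 < gaussMap^[k] x ∧ gaussMap^[k] x < 1 := by
  intro k
  induction k with
  | zero => exact ⟨hx, h0, h1⟩
  | succ k ih =>
    obtain ⟨hirr, hpos, hlt⟩ := ih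
    rw [Function.iterate_succ_apply']
    set y := gaussMap^[k] x with hy
    have hinv : Irrational (1/y) := by
      rw [one_div]; exact hirr.inv
    have hfr : Irrational (gaussMap y) := by
      unfold gaussMap Int.fract
      exact hinv.sub_intCast _
    refine ⟨hfr, ?_, ?_⟩
    · rcases (Int.fract_nonneg (1/y)).lt_or_eq with h | h
      · exact h
      · exfalso
        exact (hfr.ne_int 0) (by unfold gaussMap; rw [← h]; norm_num)
    · exact Int.fract_lt_one _

noncomputable def cfA (x : ℝ) (k : ℕ) : ℤ := ⌊1 / (gaussMap^[k] x)⌋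

noncomputable def cfPQ (x : ℝ) : ℕ → (ℤ × ℤ) × (ℤ × ℤ)
  | 0 => ((0, 1), (1, 0))
  | (k+1) =>
    let t := cfPQ x k
    ((cfA x k * t.1.1 + t.2.1, cfA x k * t.1.2 + t.2.2), t.1)

lemma cf_inv (x : ℝ) (hx : Irrational x) (h0 : 0 < x) (h1 : x < 1) : ∀ k,
    x * (((cfPQ x k).1.2 : ℝ) + (gaussMap^[k] x) * ((cfPQ x k).2.2 : ℝ))
      = ((cfPQ x k).1.1 : ℝ) + (gaussMap^[k] x) * ((cfPQ x k).2.1 : ℝ)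
    ∧ 1 ≤ (cfPQ x k).1.2 ∧ 0 ≤ (cfPQ x k).2.2
    ∧ (cfPQ x k).1.1 * (cfPQ x k).2.2 - (cfPQ x k).2.1 * (cfPQ x k).1.2 = (-1)^(k+1) := by
  intro k
  induction k with
  | zero =>
    refine ⟨by push_cast [cfPQ]; simp, by norm_num [cfPQ], by norm_num [cfPQ], by norm_num [cfPQ]⟩
  | succ k ih =>
    obtain ⟨I1, I2a, I2b, I3⟩ := ih
    have hy := (orbit_props x hx h0 h1 k)
    obtain ⟨hirr, hpos, hlt⟩ := hy
    set y := gaussMap^[k] x with hydef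
    have hyiter : gaussMap^[k+1] x = gaussMap y := by
      rw [Function.iterate_succ_apply']
    have hA1 : 1 ≤ cfA x k := by
      unfold cfA
      rw [← hydef]
      rw [Int.le_floor]
      push_cast
      rw [le_div_iff₀ hpos]
      nlinarith
    have hfract : gaussMap y = 1/y - (cfA x k : ℝ) := by
      unfold gaussMap cfA
      rw [← Int.self_sub_floor, ← hydef]
    have hyid : y * ((cfA x k : ℝ) + gaussMap^[k+1] x) = 1 := by
      rw [hyiter, hfract]
      field_simp
      ring
    -- recursion equations
    have hP : ((cfPQ x (k+1)).1.1 : ℤ) = cfA x k * (cfPQ x k).1.1 + (cfPQ x k).2.1 := rfl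
    have hQ : ((cfPQ x (k+1)).1.2 : ℤ) = cfA x k * (cfPQ x k).1.2 + (cfPQ x k).2.2 := rfl
    have hP' : ((cfPQ x (k+1)).2.1 : ℤ) = (cfPQ x k).1.1 := rfl
    have hQ' : ((cfPQ x (k+1)).2.2 : ℤ) = (cfPQ x k).1.2 := rfl
    refine ⟨?_, ?_, ?_, ?_⟩
    · rw [hP, hQ, hP', hQ']
      push_cast
      linear_combination ((cfA x k : ℝ) + gaussMap^[k+1] x) * I1
        + (((cfPQ x k).2.1 : ℝ) - x * ((cfPQ x k).2.2 : ℝ)) * hyid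
    · rw [hQ]; nlinarith [I2a, I2b, hA1]
    · rw [hQ']; omega
    · rw [hP, hQ, hP', hQ']
      linear_combination (-1 : ℤ) * I3

lemma quotient_bound (x : ℝ) (hx : Irrational x) (h0 : 0 < x) (h1 : x < 1)
    (hb : ∀ p q : ℤ, 0 < q → 1/(20*(q:ℝ)^2) < |x - p/q|) :
    ∀ k, ⌊1 / (gaussMap^[k] x)⌋ ≤ (19:ℤ) := by
  intro k
  obtain ⟨I1, I2a, I2b, I3⟩ := cf_inv x hx h0 h1 k
  obtain ⟨hirr, hpos, hlt⟩ := orbit_props x hx h0 h1 k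
  set y := gaussMap^[k] x with hydef
  set P := (cfPQ x k).1.1
  set Q := (cfPQ x k).1.2
  set P' := (cfPQ x k).2.1
  set Q' := (cfPQ x k).2.2
  have hQR : (0:ℝ) < (Q:ℝ) := by exact_mod_cast (by omega : (0:ℤ) < Q)
  have hQ'R : (0:ℝ) ≤ (Q':ℝ) := by exact_mod_cast I2b
  have hden : (0:ℝ) < (Q:ℝ) + y * (Q':ℝ) := by nlinarith
  have hd : (P' * Q - P * Q' : ℤ) = (-1)^k := by
    have : ((-1:ℤ))^(k+1) = -((-1)^k) := by rw [pow_succ]; ring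
    rw [this] at I3
    omega
  have hdenne : ((Q:ℝ)*((Q:ℝ) + y * (Q':ℝ))) ≠ 0 := by positivity
  have heq : x - (P:ℝ)/Q = y * ((P':ℝ)*Q - (P:ℝ)*Q') / ((Q:ℝ)*((Q:ℝ) + y * (Q':ℝ))) := by
    rw [eq_div_iff hdenne]
    field_simp
    linear_combination (Q:ℝ) * I1
  have hdabs : |((P':ℝ)*(Q:ℝ) - (P:ℝ)*(Q':ℝ))| = 1 := by
    have hcast : ((P':ℝ)*(Q:ℝ) - (P:ℝ)*(Q':ℝ)) = (((-1:ℤ)^k : ℤ) : ℝ) := by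
      exact_mod_cast congrArg (fun z : ℤ => (z:ℝ)) hd
    rw [hcast]
    push_cast
    rw [abs_pow, abs_neg, abs_one, one_pow]
  have habs : |x - (P:ℝ)/Q| = y / ((Q:ℝ)*((Q:ℝ) + y*(Q':ℝ))) := by
    rw [heq, abs_div, abs_mul, hdabs, mul_one, abs_of_pos hpos,
      abs_of_pos (by positivity : (0:ℝ) < (Q:ℝ)*((Q:ℝ) + y*(Q':ℝ)))]
  have hble := hb P Q (by omega)
  rw [habs] at hble
  have hQsq : (0:ℝ) < (Q:ℝ)^2 := by positivity
  have h2 : y / ((Q:ℝ)*((Q:ℝ) + y*(Q':ℝ))) ≤ y / ((Q:ℝ)*(Q:ℝ)) := by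
    apply div_le_div_of_nonneg_left hpos.le (by positivity)
    nlinarith [mul_nonneg (le_of_lt hQR) (mul_nonneg hpos.le hQ'R)]
  have hy20 : 1/20 < y := by
    have hchain : 1/(20*(Q:ℝ)^2) < y/((Q:ℝ)*(Q:ℝ)) := lt_of_lt_of_le hble h2
    rw [show (Q:ℝ)*(Q:ℝ) = (Q:ℝ)^2 by ring,
      show (1:ℝ)/(20*(Q:ℝ)^2) = (1/20)/(Q:ℝ)^2 by ring] at hchain
    exact (div_lt_div_iff_of_pos_right hQsq).mp hchain
  have h1y : (1:ℝ)/y < ((20:ℤ):ℝ) := by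
    push_cast
    rw [div_lt_iff₀ hpos]
    nlinarith
  have hfl := Int.floor_lt.mpr h1y
  omega


theorem stmt6 : (Fset 19 ∩ ternaryCantor).Nonempty := by
  refine ⟨xpt, ⟨xpt_irrational, ⟨xpt_mem.1, xpt_mem.2⟩, ?_⟩, ⟨dig, rfl⟩⟩
  intro k
  have h := quotient_bound xpt xpt_irrational xpt_mem.1 xpt_mem.2 xpt_badly k
  exact_mod_cast h
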